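/- Zeckendorf's theorem: every positive integer has a unique representation as a sum of distinct, pairwise non-consecutive Fibonacci numbers F_k with k ≥ 2. -/

import Mathlib

private lemma zeck_sum_lt (m : ℕ) (hm : 1 ≤ m) : ∀ S : Finset ℕ, (∀ k ∈ S, 2 ≤ k) →
    (∀ k ∈ S, k + 1 ∉ S) → (∀ j ∈ S, j < m) → ∑ k ∈ S, Nat.fib k < Nat.fib m := by
  induction m using Nat.strong_induction_on with
  | _ m ih =>
  intro S h2 hc hlt
  rcases S.eq_empty_or_nonempty with rfl | hne
  · simpa using Nat.fib_pos.2 hm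
  · set t := S.max' hne with ht
    have htS : t ∈ S := S.max'_mem hne
    have ht2 : 2 ≤ t := h2 t htS
    have htm : t < m := hlt t htS
    have hpred : t - 1 ∉ S := by
      intro h
      have := hc (t - 1) h
      rw [Nat.sub_add_cancel (by omega)] at this
      exact this htS
    have hS' : ∀ j ∈ S.erase t, j < t - 1 := by
      intro j hj
      have hjS := Finset.mem_of_mem_erase hj
      have hjt : j ≤ t := S.le_max' j hjS
      have h1 : j ≠ t := Finset.ne_of_mem_erase hj
      have h2' : j ≠ t - 1 := fun h => hpred (h ▸ hjS)
      omega
    have hlt' : ∑ k ∈ S.erase t, Nat.fib k < Nat.fib (t - 1) :=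
      ih (t - 1) (by omega) (by omega) _
        (fun k hk => h2 k (Finset.mem_of_mem_erase hk))
        (fun k hk h => hc k (Finset.mem_of_mem_erase hk) (Finset.mem_of_mem_erase h))
        hS'
    have hsum : ∑ k ∈ S, Nat.fib k = Nat.fib t + ∑ k ∈ S.erase t, Nat.fib k :=
      (Finset.add_sum_erase S Nat.fib htS).symm
    have hfib : Nat.fib t + Nat.fib (t - 1) = Nat.fib (t + 1) := by
      have h : t - 1 + 2 = t + 1 := by omega
      have h' : t - 1 + 1 = t := by omega
      rw [← h, Nat.fib_add_two, h']
      omega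
    have : ∑ k ∈ S, Nat.fib k < Nat.fib (t + 1) := by omega
    exact lt_of_lt_of_le this (Nat.fib_mono (by omega))

private lemma zeck_exists : ∀ n : ℕ, ∃ S : Finset ℕ, (∀ k ∈ S, 2 ≤ k) ∧
    (∀ k ∈ S, k + 1 ∉ S) ∧ ∑ k ∈ S, Nat.fib k = n ∧ ∀ j ∈ S, Nat.fib j ≤ n := by
  intro n
  induction n using Nat.strong_induction_on with
  | _ n ih =>
  rcases Nat.eq_zero_or_pos n with rfl | hn
  · exact ⟨∅, by simp⟩
  · -- find the greatest k with fib k ≤ n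
    set P : ℕ → Prop := fun k => Nat.fib k ≤ n with hP
    have hP2 : P 2 := by simpa [hP] using Nat.succ_le_of_lt hn
    set k := Nat.findGreatest P (n + 5) with hk
    have hk2 : 2 ≤ k := Nat.le_findGreatest (by omega) hP2
    have hkP : P k := Nat.findGreatest_spec (m := 2) (by omega) hP2
    have hkub : n < Nat.fib (k + 1) := by
      by_cases hbig : k + 1 ≤ n + 5
      · have := Nat.findGreatest_is_greatest (P := P) (n := n + 5) (k := k + 1)
          (by omega) hbig
        simpa [hP] using this
      · have h5 : n + 5 ≤ Nat.fib (n + 5) := Nat.le_fib_self (by omega)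
        have : Nat.fib (n + 5) ≤ Nat.fib (k + 1) := Nat.fib_mono (by omega)
        omega
    have hfk : Nat.fib k ≤ n := hkP
    have hfkpos : 0 < Nat.fib k := Nat.fib_pos.2 (by omega)
    set m := n - Nat.fib k with hm
    have hmn : m < n := by omega
    obtain ⟨S', h2', hc', hsum', hle'⟩ := ih m hmn
    have hfib : Nat.fib (k - 1) + Nat.fib k = Nat.fib (k + 1) := by
      have h : k - 1 + 2 = k + 1 := by omega
      have h' : k - 1 + 1 = k := by omega
      rw [← h, Nat.fib_add_two, h']
    have hmlt : m < Nat.fib (k - 1) := by omega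
    have hjk : ∀ j ∈ S', j < k - 1 := by
      intro j hj
      by_contra h
      have : Nat.fib (k - 1) ≤ Nat.fib j := Nat.fib_mono (by omega)
      have := hle' j hj
      omega
    have hknot : k ∉ S' := fun h => by have := hjk k h; omega
    refine ⟨insert k S', ?_, ?_, ?_, ?_⟩
    · intro j hj
      rcases Finset.mem_insert.1 hj with rfl | hj
      · exact hk2
      · exact h2' j hj
    · intro j hj hj1
      rcases Finset.mem_insert.1 hj with rfl | hj
      · rcases Finset.mem_insert.1 hj1 with h | h
        · omega
        · have := hjk _ h; omega
      · rcases Finset.mem_insert.1 hj1 with h | h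
        · have := hjk j hj; omega
        · exact hc' j hj h
    · rw [Finset.sum_insert hknot, hsum']; omega
    · intro j hj
      rcases Finset.mem_insert.1 hj with rfl | hj
      · exact hfk
      · exact le_trans (hle' j hj) (by omega)

private lemma zeck_max_bounds (S : Finset ℕ) (hne : S.Nonempty)
    (h2 : ∀ k ∈ S, 2 ≤ k) (hc : ∀ k ∈ S, k + 1 ∉ S) :
    Nat.fib (S.max' hne) ≤ ∑ k ∈ S, Nat.fib k ∧
      ∑ k ∈ S, Nat.fib k < Nat.fib (S.max' hne + 1) := by
  set t := S.max' hne with ht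
  have htS : t ∈ S := S.max'_mem hne
  have ht2 : 2 ≤ t := h2 t htS
  have hpred : t - 1 ∉ S := by
    intro h
    have := hc (t - 1) h
    rw [Nat.sub_add_cancel (by omega)] at this
    exact this htS
  have hS' : ∀ j ∈ S.erase t, j < t - 1 := by
    intro j hj
    have hjS := Finset.mem_of_mem_erase hj
    have hjt : j ≤ t := S.le_max' j hjS
    have h1 : j ≠ t := Finset.ne_of_mem_erase hj
    have h2' : j ≠ t - 1 := fun h => hpred (h ▸ hjS)
    omega
  have hlt' : ∑ k ∈ S.erase t, Nat.fib k < Nat.fib (t - 1) :=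
    zeck_sum_lt (t - 1) (by omega) _
      (fun k hk => h2 k (Finset.mem_of_mem_erase hk))
      (fun k hk h => hc k (Finset.mem_of_mem_erase hk) (Finset.mem_of_mem_erase h))
      hS'
  have hsum : ∑ k ∈ S, Nat.fib k = Nat.fib t + ∑ k ∈ S.erase t, Nat.fib k :=
    (Finset.add_sum_erase S Nat.fib htS).symm
  have hfib : Nat.fib t + Nat.fib (t - 1) = Nat.fib (t + 1) := by
    have h : t - 1 + 2 = t + 1 := by omega
    have h' : t - 1 + 1 = t := by omega
    rw [← h, Nat.fib_add_two, h']
    omega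
  omega

private lemma zeck_unique : ∀ n : ℕ, ∀ S T : Finset ℕ,
    (∀ k ∈ S, 2 ≤ k) → (∀ k ∈ S, k + 1 ∉ S) → ∑ k ∈ S, Nat.fib k = n →
    (∀ k ∈ T, 2 ≤ k) → (∀ k ∈ T, k + 1 ∉ T) → ∑ k ∈ T, Nat.fib k = n → S = T := by
  intro n
  induction n using Nat.strong_induction_on with
  | _ n ih =>
  intro S T hS2 hSc hSsum hT2 hTc hTsum
  have hempty : ∀ U : Finset ℕ, (∀ k ∈ U, 2 ≤ k) → ∑ k ∈ U, Nat.fib k = 0 → U = ∅ := by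
    intro U hU2 hU0
    rcases U.eq_empty_or_nonempty with rfl | ⟨u, hu⟩
    · rfl
    · exfalso
      have h1 : Nat.fib u = 0 := Finset.sum_eq_zero_iff.1 hU0 u hu
      have : 0 < Nat.fib u := Nat.fib_pos.2 (by have := hU2 u hu; omega)
      omega
  rcases Nat.eq_zero_or_pos n with rfl | hn
  · rw [hempty S hS2 hSsum, hempty T hT2 hTsum]
  · have hSne : S.Nonempty := by
      rcases S.eq_empty_or_nonempty with rfl | h
      · simp at hSsum; omega
      · exact h
    have hTne : T.Nonempty := by
      rcases T.eq_empty_or_nonempty with rfl | h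
      · simp at hTsum; omega
      · exact h
    obtain ⟨hS1, hS2'⟩ := zeck_max_bounds S hSne hS2 hSc
    obtain ⟨hT1, hT2'⟩ := zeck_max_bounds T hTne hT2 hTc
    set a := S.max' hSne with ha
    set b := T.max' hTne with hb
    have hab : a = b := by
      by_contra hne
      rcases Nat.lt_or_ge a b with h | h
      · have : Nat.fib b ≤ Nat.fib (a + 1) := by omega
        have h2 := Nat.fib_mono (show a + 1 ≤ b by omega)
        have hbp : 0 < b := by have := hT2 b (T.max'_mem hTne); omega
        -- fib b ≤ n < fib (a+1) ≤ fib b, need strictness... use sums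
        omega
      · have h2 := Nat.fib_mono (show b + 1 ≤ a by omega)
        omega
    have haS : a ∈ S := S.max'_mem hSne
    have hbT : b ∈ T := T.max'_mem hTne
    have haT : a ∈ T := hab ▸ hbT
    have hfa : 0 < Nat.fib a := Nat.fib_pos.2 (by have := hS2 a haS; omega)
    have hm : n - Nat.fib a < n := by omega
    have hSsum' : ∑ k ∈ S.erase a, Nat.fib k = n - Nat.fib a := by
      have := (Finset.add_sum_erase S Nat.fib haS).symm
      omega
    have hTsum' : ∑ k ∈ T.erase a, Nat.fib k = n - Nat.fib a := by
      have := (Finset.add_sum_erase T Nat.fib haT).symm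
      rw [← hab] at hT1
      omega
    have heq : S.erase a = T.erase a :=
      ih (n - Nat.fib a) hm _ _
        (fun k hk => hS2 k (Finset.mem_of_mem_erase hk))
        (fun k hk h => hSc k (Finset.mem_of_mem_erase hk) (Finset.mem_of_mem_erase h))
        hSsum'
        (fun k hk => hT2 k (Finset.mem_of_mem_erase hk))
        (fun k hk h => hTc k (Finset.mem_of_mem_erase hk) (Finset.mem_of_mem_erase h))
        hTsum'
    calc S = insert a (S.erase a) := (Finset.insert_erase haS).symm
    _ = insert a (T.erase a) := by rw [heq]
    _ = T := Finset.insert_erase haT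

/-- Zeckendorf's theorem: every positive integer is uniquely a sum of distinct,
pairwise non-consecutive Fibonacci numbers `F k` with `k ≥ 2`. -/
theorem zeckendorf (n : ℕ) (hn : 0 < n) :
    ∃! S : Finset ℕ, (∀ k ∈ S, 2 ≤ k) ∧ (∀ k ∈ S, k + 1 ∉ S) ∧ ∑ k ∈ S, Nat.fib k = n := by
  obtain ⟨S, h2, hc, hsum, -⟩ := zeck_exists n
  refine ⟨S, ⟨h2, hc, hsum⟩, ?_⟩
  rintro T ⟨hT2, hTc, hTsum⟩
  exact zeck_unique n T S hT2 hTc hTsum h2 hc hsum
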